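/- Let X = ⊕_{i=1}^k M_{n_i,m_i}(ℂ) ⊆ M_{d_B×d_E}(ℂ) (embedded block-diagonally, d_B = Σ_i n_i, d_E = Σ_i m_i) be a block-diagonal TRO and let N be the associated TRO channel. Then N decomposes as a direct sum of partial traces: identifying each block M_{n_i,m_i}(ℂ) with the Hilbert space ℂ^{n_i} ⊗ ℂ^{m_i}, one has N = ⊕_i (id_{n_i} ⊗ tr_{m_i}) on the corresponding block decomposition of inputs; moreover the range of N spans the left algebra L(X) = ⊕_i M_{n_i}(ℂ) and the range of the complementary channel N^E spans the right algebra R(X) = ⊕_i M_{m_i}(ℂ). -/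

import Mathlib

open scoped BigOperators ComplexOrder Kronecker ENNReal
open Matrix

noncomputable section

namespace TROPaper

/-- The Hilbert–Schmidt inner product `⟨x, y⟩ = tr(xᴴ y)` on matrices. -/
def hsInner {I J : Type*} [Fintype I] [Fintype J] (x y : Matrix I J ℂ) : ℂ :=
  (xᴴ * y).trace

/-- The rank-one operator `|x⟩⟨y|` on a subspace `X` of matrices, with respect to the
Hilbert–Schmidt inner product: `z ↦ ⟨y, z⟩ • x`. -/
def rankOne {I J : Type*} [Fintype I] [Fintype J] (X : Submodule ℂ (Matrix I J ℂ))
    (x y : X) : X →ₗ[ℂ] X where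
  toFun z := hsInner (y : Matrix I J ℂ) (z : Matrix I J ℂ) • x
  map_add' z w := by
    simp only [Submodule.coe_add, hsInner]
    rw [Matrix.mul_add, Matrix.trace_add, add_smul]
  map_smul' c z := by
    simp only [Submodule.coe_smul, hsInner, RingHom.id_apply]
    rw [Matrix.mul_smul, Matrix.trace_smul, smul_eq_mul, ← smul_smul]

/-- A ternary ring of operators: a subspace closed under `x yᴴ z`. -/
def IsTRO {I J : Type*} [Fintype I] [Fintype J] (X : Submodule ℂ (Matrix I J ℂ)) : Prop :=
  ∀ x ∈ X, ∀ y ∈ X, ∀ z ∈ X, x * yᴴ * z ∈ X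

/-- The left algebra `L(X) = span{x yᴴ : x, y ∈ X}`. -/
def leftAlg {I J : Type*} [Fintype I] [Fintype J] (X : Submodule ℂ (Matrix I J ℂ)) :
    Submodule ℂ (Matrix I I ℂ) :=
  Submodule.span ℂ {a | ∃ x ∈ X, ∃ y ∈ X, a = x * yᴴ}

/-- The right algebra `R(X) = span{xᴴ y : x, y ∈ X}`. -/
def rightAlg {I J : Type*} [Fintype I] [Fintype J] (X : Submodule ℂ (Matrix I J ℂ)) :
    Submodule ℂ (Matrix J J ℂ) :=
  Submodule.span ℂ {a | ∃ x ∈ X, ∃ y ∈ X, a = xᴴ * y}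

/-- The normalized trace `τ = tr / dim`. -/
def ntrace {J : Type*} [Fintype J] (f : Matrix J J ℂ) : ℂ :=
  f.trace / (Fintype.card J : ℂ)

/-- A symbol for a TRO `X`: a normalized density strongly independent of the
right algebra `R(X)`. -/
def IsSymbolTRO {I J : Type*} [Fintype I] [Fintype J] [DecidableEq J]
    (X : Submodule ℂ (Matrix I J ℂ)) (f : Matrix J J ℂ) : Prop :=
  f.PosSemidef ∧ ntrace f = 1 ∧
    ∀ (n : ℕ), ∀ y ∈ rightAlg X, ntrace (f ^ n * y) = ntrace (f ^ n) * ntrace y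

/-- Singular values of a square matrix: square roots of eigenvalues of `aᴴ a`. -/
def singularValues {I : Type*} [Fintype I] [DecidableEq I] (a : Matrix I I ℂ) : I → ℝ :=
  fun i => Real.sqrt ((Matrix.posSemidef_conjTranspose_mul_self a).1.eigenvalues i)

/-- The Schatten `p`-norm `(tr |a|^p)^(1/p)` (operator norm for `p = ∞`). -/
def schattenNorm {I : Type*} [Fintype I] [DecidableEq I] (p : ℝ≥0∞) (a : Matrix I I ℂ) : ℝ :=
  if p = ∞ then ⨆ i, singularValues a i
  else (∑ i, singularValues a i ^ p.toReal) ^ (1 / p.toReal)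

/-- The `L_p`-norm `(τ(|f|^p))^(1/p)` with respect to the normalized trace `τ = tr/dim`. -/
def schattenNormTau {J : Type*} [Fintype J] [DecidableEq J] (p : ℝ≥0∞) (f : Matrix J J ℂ) : ℝ :=
  if p = ∞ then ⨆ i, singularValues f i
  else ((∑ i, singularValues f i ^ p.toReal) / (Fintype.card J : ℝ)) ^ (1 / p.toReal)

/-- Real power of a hermitian matrix via the spectral decomposition; for negative exponents
this is the power of the inverse on the support (since `0 ^ r = 0` for `r ≠ 0`).
Junk value `0` for non-hermitian input. -/
def herPow {I : Type*} [Fintype I] [DecidableEq I] (σ : Matrix I I ℂ) (r : ℝ) :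
    Matrix I I ℂ :=
  if h : σ.IsHermitian then
    (h.eigenvectorUnitary : Matrix I I ℂ) *
      Matrix.diagonal (fun i => ((h.eigenvalues i ^ r : ℝ) : ℂ)) *
      (star (h.eigenvectorUnitary : Matrix I I ℂ))
  else 0

/-- The conjugate exponent `p' = (1 - 1/p)⁻¹` of `p`, as a real number. -/
def econj (p : ℝ≥0∞) : ℝ := ((1 - p⁻¹)⁻¹ : ℝ≥0∞).toReal

/-- Partial trace over the right (second) tensor factor. -/
def trRight {A B : Type*} [Fintype A] [Fintype B] :
    Matrix (A × B) (A × B) ℂ →ₗ[ℂ] Matrix A A ℂ where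
  toFun M := Matrix.of fun a a' => ∑ b, M (a, b) (a', b)
  map_add' M N := by
    funext a a'
    simp [Finset.sum_add_distrib]
  map_smul' c M := by
    funext a a'
    simp [Finset.mul_sum]

/-- Partial trace over the left (first) tensor factor. -/
def trLeft {A B : Type*} [Fintype A] [Fintype B] :
    Matrix (A × B) (A × B) ℂ →ₗ[ℂ] Matrix B B ℂ where
  toFun M := Matrix.of fun b b' => ∑ a, M (a, b) (a, b')
  map_add' M N := by
    funext b b'
    simp [Finset.sum_add_distrib]
  map_smul' c M := by
    funext b b'
    simp [Finset.mul_sum]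

/-- Conjugation `ρ ↦ V ρ Vᴴ`. -/
def dilate {A P : Type*} [Fintype A] [Fintype P] (V : Matrix P A ℂ) :
    Matrix A A ℂ →ₗ[ℂ] Matrix P P ℂ where
  toFun ρ := V * ρ * Vᴴ
  map_add' ρ σ := by simp [Matrix.mul_add, Matrix.add_mul]
  map_smul' c ρ := by simp [Matrix.mul_smul, Matrix.smul_mul]

/-- The modified channel `N_f(ρ) = tr_E((1 ⊗ f) V ρ Vᴴ)` associated to a Stinespring
isometry `V : ℂ^A → ℂ^B ⊗ ℂ^E` and an operator `f` on the environment `E`; it satisfies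
`N_f(|h⟩⟨k|) = h f kᴴ` on the matrices `h, k` corresponding to `V|h⟩, V|k⟩`.
For `f = 1` this is the channel `N(ρ) = tr_E(V ρ Vᴴ)` itself. -/
def modChannel {A B E : Type*} [Fintype A] [Fintype B] [Fintype E] [DecidableEq B]
    (V : Matrix (B × E) A ℂ) (f : Matrix E E ℂ) :
    Matrix A A ℂ →ₗ[ℂ] Matrix B B ℂ :=
  trRight ∘ₗ LinearMap.mulLeft ℂ ((1 : Matrix B B ℂ) ⊗ₖ fᵀ) ∘ₗ dilate V

/-- The matrix in `M_{B×E}` corresponding to the vector `V|h⟩ ∈ ℂ^B ⊗ ℂ^E`. -/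
def toMat {A B E : Type*} [Fintype A] [Fintype B] [Fintype E] (V : Matrix (B × E) A ℂ) :
    (A → ℂ) →ₗ[ℂ] Matrix B E ℂ where
  toFun h := Matrix.of fun b e => V.mulVec h (b, e)
  map_add' h k := by
    funext b e
    simp [Matrix.mulVec_add]
  map_smul' c h := by
    funext b e
    simp [Matrix.mulVec_smul]

/-- The Stinespring space of `V`: the matrices corresponding to vectors in the range of `V`. -/
def stinespringSpace {A B E : Type*} [Fintype A] [Fintype B] [Fintype E]
    (V : Matrix (B × E) A ℂ) : Submodule ℂ (Matrix B E ℂ) :=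
  LinearMap.range (toMat V)

/-- A symbol of the channel with Stinespring isometry `V`: a normalized density `f` on the
environment that is strongly independent of the right algebra of some TRO containing the
Stinespring space. -/
def IsSymbol {A B E : Type*} [Fintype A] [Fintype B] [Fintype E] [DecidableEq E]
    (V : Matrix (B × E) A ℂ) (f : Matrix E E ℂ) : Prop :=
  f.PosSemidef ∧ ntrace f = 1 ∧
    ∃ X : Submodule ℂ (Matrix B E ℂ), IsTRO X ∧ stinespringSpace V ≤ X ∧
      ∀ (n : ℕ), ∀ y ∈ rightAlg X, ntrace (f ^ n * y) = ntrace (f ^ n) * ntrace y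

/-- Ampliation `id_C ⊗ Φ` of a linear map on matrix algebras. -/
def ampl (C : Type*) {A B : Type*} [Fintype C] [Fintype A] [Fintype B]
    (Φ : Matrix A A ℂ →ₗ[ℂ] Matrix B B ℂ) :
    Matrix (C × A) (C × A) ℂ →ₗ[ℂ] Matrix (C × B) (C × B) ℂ where
  toFun ρ := Matrix.of fun p q => Φ (Matrix.of fun a a' => ρ (p.1, a) (q.1, a')) p.2 q.2
  map_add' ρ σ := by
    funext p q
    have h : (Matrix.of fun a a' => (ρ + σ) (p.1, a) (q.1, a')) =
        (Matrix.of fun a a' => ρ (p.1, a) (q.1, a')) +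
          (Matrix.of fun a a' => σ (p.1, a) (q.1, a')) := rfl
    show Φ _ p.2 q.2 = _
    rw [h, map_add]
    rfl
  map_smul' c ρ := by
    funext p q
    have h : (Matrix.of fun a a' => (c • ρ) (p.1, a) (q.1, a')) =
        c • (Matrix.of fun a a' => ρ (p.1, a) (q.1, a')) := rfl
    show Φ _ p.2 q.2 = _
    rw [h, LinearMap.map_smul]
    rfl

/-- A state: positive semidefinite with trace one. -/
def IsState {I : Type*} [Fintype I] (ρ : Matrix I I ℂ) : Prop :=
  ρ.PosSemidef ∧ ρ.trace = 1

/-- Complete positivity of a map between matrix algebras. -/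
def CompletelyPositive {A B : Type*} [Fintype A] [Fintype B]
    (Φ : Matrix A A ℂ →ₗ[ℂ] Matrix B B ℂ) : Prop :=
  ∀ (d : ℕ) (ρ : Matrix (Fin d × A) (Fin d × A) ℂ), ρ.PosSemidef → (ampl (Fin d) Φ ρ).PosSemidef

/-- Trace preservation. -/
def TracePreserving {A B : Type*} [Fintype A] [Fintype B]
    (Φ : Matrix A A ℂ →ₗ[ℂ] Matrix B B ℂ) : Prop :=
  ∀ ρ, (Φ ρ).trace = ρ.trace

/-- A quantum channel: a completely positive trace-preserving map. -/
def IsQuantumChannel {A B : Type*} [Fintype A] [Fintype B]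
    (Φ : Matrix A A ℂ →ₗ[ℂ] Matrix B B ℂ) : Prop :=
  CompletelyPositive Φ ∧ TracePreserving Φ

/-- The von Neumann entropy `H(ρ) = -tr(ρ log ρ)` (natural logarithm), computed through the
eigenvalues; junk value `0` for non-hermitian input. -/
def vnEntropy {I : Type*} [Fintype I] [DecidableEq I] (ρ : Matrix I I ℂ) : ℝ :=
  if h : ρ.IsHermitian then -∑ i, h.eigenvalues i * Real.log (h.eigenvalues i) else 0

/-- Coherent information of a bipartite state `ω` on `A ⊗ B`:
`I_c(A⟩B)_ω = H(ω^{AB}) - H(ω^B)`. -/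
def coherentInfo {A B : Type*} [Fintype A] [Fintype B] [DecidableEq A] [DecidableEq B]
    (ω : Matrix (A × B) (A × B) ℂ) : ℝ :=
  vnEntropy ω - vnEntropy (trLeft ω)

/-- Mutual information of a bipartite state `ω` on `A ⊗ B`:
`I(A:B)_ω = H(ω^A) + H(ω^B) - H(ω^{AB})`. -/
def mutualInfo {A B : Type*} [Fintype A] [Fintype B] [DecidableEq A] [DecidableEq B]
    (ω : Matrix (A × B) (A × B) ℂ) : ℝ :=
  vnEntropy (trRight ω) + vnEntropy (trLeft ω) - vnEntropy ω

/-- `τ(f log f)` with respect to the normalized trace `τ = tr/dim` (natural logarithm). -/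
def tauLog {J : Type*} [Fintype J] [DecidableEq J] (f : Matrix J J ℂ) : ℝ :=
  if h : f.IsHermitian then
    (∑ i, h.eigenvalues i * Real.log (h.eigenvalues i)) / (Fintype.card J : ℝ)
  else 0

/-- One-shot quantum capacity: the supremum of coherent informations of outputs of
`id_A ⊗ Φ` over all finite-dimensional ancillas `A` and bipartite input states. -/
def Q1 {A B : Type*} [Fintype A] [Fintype B] [DecidableEq B]
    (Φ : Matrix A A ℂ →ₗ[ℂ] Matrix B B ℂ) : ℝ :=
  sSup {r | ∃ (d : ℕ) (ρ : Matrix (Fin d × A) (Fin d × A) ℂ), IsState ρ ∧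
    r = coherentInfo (ampl (Fin d) Φ ρ)}

/-- The Holevo quantity `χ(Φ)`: the supremum over finite ensembles of
`H(Φ(Σ p_x ρ_x)) - Σ p_x H(Φ(ρ_x))`. -/
def holevoChi {A B : Type*} [Fintype A] [Fintype B] [DecidableEq B]
    (Φ : Matrix A A ℂ →ₗ[ℂ] Matrix B B ℂ) : ℝ :=
  sSup {r | ∃ (k : ℕ) (pr : Fin k → ℝ) (ρs : Fin k → Matrix A A ℂ),
    (∀ x, 0 ≤ pr x) ∧ (∑ x, pr x = 1) ∧ (∀ x, IsState (ρs x)) ∧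
    r = vnEntropy (Φ (∑ x, (pr x : ℂ) • ρs x)) - ∑ x, pr x * vnEntropy (Φ (ρs x))}

/-- Entanglement-assisted classical capacity: supremum of mutual informations of outputs. -/
def CEA {A B : Type*} [Fintype A] [Fintype B] [DecidableEq A] [DecidableEq B]
    (Φ : Matrix A A ℂ →ₗ[ℂ] Matrix B B ℂ) : ℝ :=
  sSup {r | ∃ (d : ℕ) (ρ : Matrix (Fin d × A) (Fin d × A) ℂ), IsState ρ ∧
    r = mutualInfo (ampl (Fin d) Φ ρ)}

/-- Tensor product `Φ ⊗ Ψ` of linear maps between matrix algebras. -/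
def tensorMap {A A' B B' : Type*} [Fintype A] [Fintype A'] [Fintype B] [Fintype B']
    [DecidableEq A] [DecidableEq A']
    (Φ : Matrix A A ℂ →ₗ[ℂ] Matrix B B ℂ) (Ψ : Matrix A' A' ℂ →ₗ[ℂ] Matrix B' B' ℂ) :
    Matrix (A × A') (A × A') ℂ →ₗ[ℂ] Matrix (B × B') (B × B') ℂ where
  toFun ρ := Matrix.of fun p q =>
    ∑ t : (A × A) × (A' × A'),
      ρ (t.1.1, t.2.1) (t.1.2, t.2.2) *
        (Φ (Matrix.single t.1.1 t.1.2 1) p.1 q.1 *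
          Ψ (Matrix.single t.2.1 t.2.2 1) p.2 q.2)
  map_add' ρ σ := by
    funext p q
    simp [Matrix.add_apply, add_mul, Finset.sum_add_distrib]
  map_smul' c ρ := by
    funext p q
    simp [Matrix.smul_apply, smul_eq_mul, Finset.mul_sum, mul_assoc]

/-- `k`-fold tensor power `Φ^{⊗k}` of a linear map between matrix algebras. -/
def tensorPow {A B : Type*} [Fintype A] [Fintype B] [DecidableEq A]
    (Φ : Matrix A A ℂ →ₗ[ℂ] Matrix B B ℂ) (k : ℕ) :
    Matrix (Fin k → A) (Fin k → A) ℂ →ₗ[ℂ] Matrix (Fin k → B) (Fin k → B) ℂ where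
  toFun ρ := Matrix.of fun p q =>
    ∑ t : (Fin k → A) × (Fin k → A),
      ρ t.1 t.2 * ∏ i, Φ (Matrix.single (t.1 i) (t.2 i) 1) (p i) (q i)
  map_add' ρ σ := by
    funext p q
    simp [Matrix.add_apply, add_mul, Finset.sum_add_distrib]
  map_smul' c ρ := by
    funext p q
    simp [Matrix.smul_apply, smul_eq_mul, Finset.mul_sum, mul_assoc]

/-- Quantum capacity `Q(Φ) = lim_k Q^{(1)}(Φ^{⊗k})/k`. -/
def qCap {A B : Type*} [Fintype A] [Fintype B] [DecidableEq A] [DecidableEq B]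
    (Φ : Matrix A A ℂ →ₗ[ℂ] Matrix B B ℂ) : ℝ :=
  Filter.limUnder Filter.atTop (fun k : ℕ => Q1 (tensorPow Φ k) / k)

/-- The norm `‖ω‖_{S_1(B, S_p(A))}`: the infimum over states `σ` on `B` of
`‖(1_A ⊗ σ^{-1/(2p')}) ω (1_A ⊗ σ^{-1/(2p')})‖_p`. -/
def S1SpNorm {A B : Type*} [Fintype A] [Fintype B] [DecidableEq A] [DecidableEq B]
    (p : ℝ≥0∞) (ω : Matrix (A × B) (A × B) ℂ) : ℝ :=
  sInf {r | ∃ σ : Matrix B B ℂ, IsState σ ∧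
    r = schattenNorm p
      (((1 : Matrix A A ℂ) ⊗ₖ herPow σ (-(1 / (2 * econj p)))) * ω *
        ((1 : Matrix A A ℂ) ⊗ₖ herPow σ (-(1 / (2 * econj p)))))}

/-- The sandwiched Rényi coherent information `I_{c,p}(A⟩B)_ω = p' log ‖ω‖_{S_1(B,S_p(A))}`. -/
def renyiCoherentInfo {A B : Type*} [Fintype A] [Fintype B] [DecidableEq A] [DecidableEq B]
    (p : ℝ≥0∞) (ω : Matrix (A × B) (A × B) ℂ) : ℝ :=
  econj p * Real.log (S1SpNorm p ω)

/-- Positivity of an operator on a subspace of matrices with the HS inner product. -/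
def IsPosOpX {I J : Type*} [Fintype I] [Fintype J] {X : Submodule ℂ (Matrix I J ℂ)}
    (T : X →ₗ[ℂ] X) : Prop :=
  ∀ v : X, 0 ≤ hsInner (v : Matrix I J ℂ) ((T v : X) : Matrix I J ℂ)


/-- The block-diagonal subspace of matrices indexed by sigma types: entries vanish off
the diagonal blocks.  For rectangular blocks this is the TRO `⊕_i M_{n_i, m_i}`. -/
def blockDiag {k : ℕ} (n m : Fin k → ℕ) :
    Submodule ℂ (Matrix (Σ i, Fin (n i)) (Σ i, Fin (m i)) ℂ) where
  carrier := {x | ∀ u v, u.1 ≠ v.1 → x u v = 0}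
  add_mem' := by
    intro a b ha hb u v h
    simp [Matrix.add_apply, ha u v h, hb u v h]
  zero_mem' := by intro u v h; rfl
  smul_mem' := by
    intro c x hx u v h
    simp [Matrix.smul_apply, hx u v h]

/-- The canonical matrix unit `e_{ab}` of the `i`-th diagonal block, as an element of the
block-diagonal TRO. -/
def basElt {k : ℕ} (n m : Fin k → ℕ) (i : Fin k) (a : Fin (n i)) (b : Fin (m i)) :
    blockDiag n m :=
  ⟨Matrix.single ⟨i, a⟩ ⟨i, b⟩ 1, by
    intro u v huv
    by_cases h : (⟨i, a⟩ : Σ j, Fin (n j)) = u ∧ (⟨i, b⟩ : Σ j, Fin (m j)) = v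
    · exact absurd (by rw [← h.1, ← h.2]) huv
    · simp [Matrix.single, h]⟩

/-- entry-reading vector of a matrix, under `ℂ^B ⊗ ℂ^E ≅ M_{B×E}`. -/
def vecE {B E : Type*} (x : Matrix B E ℂ) : B × E → ℂ := fun p => x p.1 p.2

/-- Inner product on tuples of elements of a subspace of matrices. -/
def pInner {I J C : Type*} [Fintype I] [Fintype J] [Fintype C]
    {X : Submodule ℂ (Matrix I J ℂ)} (v w : C → X) : ℂ :=
  ∑ c, hsInner ((v c : X) : Matrix I J ℂ) ((w c : X) : Matrix I J ℂ)

/-- Ampliation `id_C ⊗ Φ` of a map defined on operators on a subspace `X` of matrices. -/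
def amplX {I J B : Type*} [Fintype I] [Fintype J] [Fintype B]
    {X : Submodule ℂ (Matrix I J ℂ)} (C : Type*) [Fintype C] [DecidableEq C]
    (Φ : (X →ₗ[ℂ] X) →ₗ[ℂ] Matrix B B ℂ) :
    ((C → X) →ₗ[ℂ] (C → X)) →ₗ[ℂ] Matrix (C × B) (C × B) ℂ where
  toFun T := Matrix.of fun p q =>
    Φ (LinearMap.proj p.1 ∘ₗ T ∘ₗ LinearMap.single ℂ (fun _ : C => X) q.1) p.2 q.2
  map_add' T S := by
    funext p q
    have h : (LinearMap.proj p.1 ∘ₗ (T + S) ∘ₗ LinearMap.single ℂ (fun _ : C => X) q.1 :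
          X →ₗ[ℂ] X)
        = LinearMap.proj p.1 ∘ₗ T ∘ₗ LinearMap.single ℂ (fun _ : C => X) q.1
          + LinearMap.proj p.1 ∘ₗ S ∘ₗ LinearMap.single ℂ (fun _ : C => X) q.1 := by
      ext z; rfl
    show Φ _ p.2 q.2 = _
    rw [h, map_add]; rfl
  map_smul' c T := by
    funext p q
    have h : (LinearMap.proj p.1 ∘ₗ (c • T) ∘ₗ LinearMap.single ℂ (fun _ : C => X) q.1 :
          X →ₗ[ℂ] X)
        = c • (LinearMap.proj p.1 ∘ₗ T ∘ₗ LinearMap.single ℂ (fun _ : C => X) q.1) := by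
      ext z; rfl
    show Φ _ p.2 q.2 = _
    rw [h, LinearMap.map_smul]; rfl

/-- The direct sum of partial traces `⊕_i (id_{n_i} ⊗ tr_{m_i})`. -/
def sumPartialTraces {k : ℕ} (n m : Fin k → ℕ) :
    Matrix (Σ i, Fin (n i) × Fin (m i)) (Σ i, Fin (n i) × Fin (m i)) ℂ →ₗ[ℂ]
      Matrix (Σ i, Fin (n i)) (Σ i, Fin (n i)) ℂ where
  toFun ρ := Matrix.of fun u v =>
    if h : u.1 = v.1 then
      ∑ b : Fin (m u.1), ρ ⟨u.1, (u.2, b)⟩ ⟨v.1, (v.2, Fin.cast (congrArg m h) b)⟩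
    else 0
  map_add' ρ σ := by
    funext u v
    simp only [Matrix.of_apply, Matrix.add_apply]
    by_cases h : u.1 = v.1
    · rw [dif_pos h, dif_pos h, dif_pos h, Finset.sum_add_distrib]
    · rw [dif_neg h, dif_neg h, dif_neg h, add_zero]
  map_smul' c ρ := by
    funext u v
    simp only [Matrix.of_apply, Matrix.smul_apply, smul_eq_mul, RingHom.id_apply]
    by_cases h : u.1 = v.1
    · rw [dif_pos h, dif_pos h, Finset.mul_sum]
    · rw [dif_neg h, dif_neg h, mul_zero]

/-- Random unitary channel `ρ ↦ Σ_g q(g) u(g) ρ u(g)ᴴ`. -/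
def randUnitary {G : Type*} [Fintype G] {H : Type*} [Fintype H]
    (u : G → Matrix H H ℂ) (q : G → ℝ) :
    Matrix H H ℂ →ₗ[ℂ] Matrix H H ℂ where
  toFun ρ := ∑ g, (q g : ℂ) • (u g * ρ * (u g)ᴴ)
  map_add' ρ σ := by
    simp [Matrix.mul_add, Matrix.add_mul, smul_add, Finset.sum_add_distrib]
  map_smul' c ρ := by
    simp only [RingHom.id_apply]
    rw [Finset.smul_sum]
    refine Finset.sum_congr rfl fun g _ => ?_
    rw [Matrix.mul_smul, Matrix.smul_mul, smul_smul, smul_smul, mul_comm]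

/-- The negative cb-entropy `-S_cb(Φ)`: the supremum over pure bipartite inputs of
`H(ω^A) - H(ω^{AB})`. -/
def negScb {A B : Type*} [Fintype A] [Fintype B] [DecidableEq A] [DecidableEq B]
    (Φ : Matrix A A ℂ →ₗ[ℂ] Matrix B B ℂ) : ℝ :=
  sSup {r | ∃ v : A × A → ℂ, (∑ p, Complex.normSq (v p)) = 1 ∧
    r = vnEntropy (trRight (ampl A Φ (Matrix.vecMulVec v (star v)))) -
        vnEntropy (ampl A Φ (Matrix.vecMulVec v (star v)))}

/-- The unit vector of the maximally entangled state `(1/√m) Σ_i |ii⟩`. -/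
def maxEntVec (m : ℕ) : Fin m × Fin m → ℂ :=
  fun ij => if ij.1 = ij.2 then (1 / Real.sqrt m : ℝ) else 0



section Aux

lemma stdH {I J : Type*} [DecidableEq I] [DecidableEq J] (p : I) (q : J) :
    (Matrix.single p q (1:ℂ))ᴴ = Matrix.single q p 1 := by
  ext i j
  simp only [Matrix.conjTranspose_apply, Matrix.single, Matrix.of_apply]
  split_ifs with h1 h2 h2 <;> simp_all [and_comm]

lemma std_mul_std {I J K : Type*} [Fintype J] [DecidableEq I] [DecidableEq J] [DecidableEq K]
    (p : I) (q q' : J) (r : K) :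
    Matrix.single p q (1:ℂ) * Matrix.single q' r (1:ℂ) =
      if q = q' then Matrix.single p r 1 else 0 := by
  ext u v
  simp only [Matrix.mul_apply, Matrix.single, Matrix.of_apply, ite_mul, mul_ite,
    one_mul, mul_one, zero_mul, mul_zero, ite_and]
  by_cases hq : q = q' <;> by_cases hp : p = u <;> by_cases hr : r = v <;>
    simp [hq, hp, hr, Finset.sum_ite_eq, Finset.sum_ite_eq']

lemma hsInner_std {I J : Type*} [Fintype I] [Fintype J] [DecidableEq I] [DecidableEq J]
    (p : I) (q : J) (M : Matrix I J ℂ) :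
    hsInner (Matrix.single p q 1) M = M p q := by
  simp [hsInner, Matrix.trace, Matrix.diag, Matrix.mul_apply, Matrix.conjTranspose_apply,
    Matrix.single, ite_and, apply_ite, Finset.sum_ite_eq, Finset.sum_ite_eq']

variable {k : ℕ} (n m : Fin k → ℕ)

/-- Index set for the matrix-unit basis of `blockDiag n m`. -/
abbrev Idx := Σ i : Fin k, Fin (n i) × Fin (m i)

/-- The matrix-unit basis of `blockDiag n m`, indexed by `Idx n m`. -/
def bas (α : Idx n m) : blockDiag n m := basElt n m α.1 α.2.1 α.2.2

lemma bas_coe (α : Idx n m) :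
    ((bas n m α : blockDiag n m) : Matrix (Σ i, Fin (n i)) (Σ i, Fin (m i)) ℂ) =
      Matrix.single ⟨α.1, α.2.1⟩ ⟨α.1, α.2.2⟩ 1 := rfl

lemma expand (z : blockDiag n m) :
    z = ∑ α : Idx n m,
      ((z : Matrix (Σ i, Fin (n i)) (Σ i, Fin (m i)) ℂ) ⟨α.1, α.2.1⟩ ⟨α.1, α.2.2⟩) • bas n m α := by
  apply Subtype.ext
  rw [AddSubmonoidClass.coe_finset_sum]
  ext u v
  obtain ⟨iu, au⟩ := u
  obtain ⟨iv, bv⟩ := v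
  rw [Matrix.sum_apply]
  by_cases hiv : iu = iv
  · subst hiv
    rw [Finset.sum_eq_single (⟨iu, (au, bv)⟩ : Idx n m)]
    · simp [bas_coe, Matrix.single]
    · rintro ⟨i, a, b⟩ - hne
      simp only [Submodule.coe_smul, Matrix.smul_apply, bas_coe, Matrix.single,
        Matrix.of_apply, smul_eq_mul]
      rw [if_neg, mul_zero]
      rintro ⟨h1, h2⟩
      obtain ⟨hi, ha⟩ := Sigma.mk.inj_iff.mp h1
      subst hi
      obtain ⟨-, hb⟩ := Sigma.mk.inj_iff.mp h2
      exact hne (by simp [heq_eq_eq] at ha hb; simp [ha, hb])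
    · intro h; exact absurd (Finset.mem_univ _) h
  · rw [Finset.sum_eq_zero, (z.2 ⟨iu, au⟩ ⟨iv, bv⟩ hiv)]
    rintro ⟨i, a, b⟩ -
    simp only [Submodule.coe_smul, Matrix.smul_apply, bas_coe, Matrix.single,
      Matrix.of_apply, smul_eq_mul]
    rw [if_neg, mul_zero]
    rintro ⟨h1, h2⟩
    exact hiv ((Sigma.mk.inj_iff.mp h1).1.symm.trans (Sigma.mk.inj_iff.mp h2).1)

lemma rankOne_apply {I J : Type*} [Fintype I] [Fintype J] (X : Submodule ℂ (Matrix I J ℂ))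
    (x y z : X) :
    rankOne X x y z = hsInner (y : Matrix I J ℂ) (z : Matrix I J ℂ) • x := rfl

lemma mem_blockDiag {k : ℕ} {n m : Fin k → ℕ}
    {x : Matrix (Σ i, Fin (n i)) (Σ i, Fin (m i)) ℂ} :
    x ∈ blockDiag n m ↔ ∀ u v, u.1 ≠ v.1 → x u v = 0 := Iff.rfl

variable {k : ℕ} (n m : Fin k → ℕ)

lemma hsInner_bas (α : Idx n m) (M : Matrix (Σ i, Fin (n i)) (Σ i, Fin (m i)) ℂ) :
    hsInner ((bas n m α : blockDiag n m) : Matrix (Σ i, Fin (n i)) (Σ i, Fin (m i)) ℂ) M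
      = M ⟨α.1, α.2.1⟩ ⟨α.1, α.2.2⟩ := by
  rw [bas_coe, hsInner_std]

lemma expand' (z : blockDiag n m) :
    z = ∑ α : Idx n m,
      hsInner ((bas n m α : blockDiag n m) : Matrix (Σ i, Fin (n i)) (Σ i, Fin (m i)) ℂ)
        (z : Matrix (Σ i, Fin (n i)) (Σ i, Fin (m i)) ℂ) • bas n m α := by
  conv_lhs => rw [expand n m z]
  exact Finset.sum_congr rfl fun α _ => by rw [hsInner_bas]

lemma decomp (T : blockDiag n m →ₗ[ℂ] blockDiag n m) :
    T = ∑ α : Idx n m, ∑ β : Idx n m,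
      hsInner ((bas n m α : blockDiag n m) : Matrix (Σ i, Fin (n i)) (Σ i, Fin (m i)) ℂ)
          ((T (bas n m β) : blockDiag n m) : Matrix (Σ i, Fin (n i)) (Σ i, Fin (m i)) ℂ) •
        rankOne (blockDiag n m) (bas n m α) (bas n m β) := by
  apply LinearMap.ext
  intro z
  conv_lhs => rw [expand' n m z]
  rw [map_sum]
  simp only [_root_.map_smul, LinearMap.sum_apply, LinearMap.smul_apply, rankOne_apply]
  rw [Finset.sum_comm]
  refine Finset.sum_congr rfl fun β _ => ?_
  conv_lhs => rw [expand' n m (T (bas n m β))]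
  rw [Finset.smul_sum]
  exact Finset.sum_congr rfl fun α _ => smul_comm _ _ _

lemma basMul (α β : Idx n m) :
    ((bas n m α : blockDiag n m) : Matrix (Σ i, Fin (n i)) (Σ i, Fin (m i)) ℂ) *
      ((bas n m β : blockDiag n m) : Matrix (Σ i, Fin (n i)) (Σ i, Fin (m i)) ℂ)ᴴ =
    if (⟨α.1, α.2.2⟩ : Σ i, Fin (m i)) = ⟨β.1, β.2.2⟩ then
      Matrix.single ⟨α.1, α.2.1⟩ ⟨β.1, β.2.1⟩ 1 else 0 := by
  rw [bas_coe, bas_coe, stdH, std_mul_std]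

lemma basMulH (α β : Idx n m) :
    ((bas n m β : blockDiag n m) : Matrix (Σ i, Fin (n i)) (Σ i, Fin (m i)) ℂ)ᴴ *
      ((bas n m α : blockDiag n m) : Matrix (Σ i, Fin (n i)) (Σ i, Fin (m i)) ℂ) =
    if (⟨β.1, β.2.1⟩ : Σ i, Fin (n i)) = ⟨α.1, α.2.1⟩ then
      Matrix.single ⟨β.1, β.2.2⟩ ⟨α.1, α.2.2⟩ 1 else 0 := by
  rw [bas_coe, bas_coe, stdH, std_mul_std]

lemma N_eq (N : ((blockDiag n m) →ₗ[ℂ] (blockDiag n m)) →ₗ[ℂ]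
      Matrix (Σ i, Fin (n i)) (Σ i, Fin (n i)) ℂ)
    (hN : ∀ x y : blockDiag n m,
      N (rankOne (blockDiag n m) x y) =
        (x : Matrix (Σ i, Fin (n i)) (Σ i, Fin (m i)) ℂ) *
          (y : Matrix (Σ i, Fin (n i)) (Σ i, Fin (m i)) ℂ)ᴴ)
    (ρ : (blockDiag n m) →ₗ[ℂ] (blockDiag n m)) :
    N ρ = ∑ α : Idx n m, ∑ β : Idx n m,
      hsInner ((bas n m α : blockDiag n m) : Matrix (Σ i, Fin (n i)) (Σ i, Fin (m i)) ℂ)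
          ((ρ (bas n m β) : blockDiag n m) : Matrix (Σ i, Fin (n i)) (Σ i, Fin (m i)) ℂ) •
        (((bas n m α : blockDiag n m) : Matrix (Σ i, Fin (n i)) (Σ i, Fin (m i)) ℂ) *
          ((bas n m β : blockDiag n m) : Matrix (Σ i, Fin (n i)) (Σ i, Fin (m i)) ℂ)ᴴ) := by
  conv_lhs => rw [decomp n m ρ]
  rw [map_sum]
  simp only [map_sum, _root_.map_smul, hN]

lemma NE_eq (NE : ((blockDiag n m) →ₗ[ℂ] (blockDiag n m)) →ₗ[ℂ]
      Matrix (Σ i, Fin (m i)) (Σ i, Fin (m i)) ℂ)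
    (hNE : ∀ x y : blockDiag n m,
      NE (rankOne (blockDiag n m) x y) =
        (y : Matrix (Σ i, Fin (n i)) (Σ i, Fin (m i)) ℂ)ᴴ *
          (x : Matrix (Σ i, Fin (n i)) (Σ i, Fin (m i)) ℂ))
    (ρ : (blockDiag n m) →ₗ[ℂ] (blockDiag n m)) :
    NE ρ = ∑ α : Idx n m, ∑ β : Idx n m,
      hsInner ((bas n m α : blockDiag n m) : Matrix (Σ i, Fin (n i)) (Σ i, Fin (m i)) ℂ)
          ((ρ (bas n m β) : blockDiag n m) : Matrix (Σ i, Fin (n i)) (Σ i, Fin (m i)) ℂ) •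
        (((bas n m β : blockDiag n m) : Matrix (Σ i, Fin (n i)) (Σ i, Fin (m i)) ℂ)ᴴ *
          ((bas n m α : blockDiag n m) : Matrix (Σ i, Fin (n i)) (Σ i, Fin (m i)) ℂ)) := by
  conv_lhs => rw [decomp n m ρ]
  rw [map_sum]
  simp only [map_sum, _root_.map_smul, hNE]

end Aux

/-- The channel associated to the block-diagonal TRO
`X = ⊕_i M_{n_i,m_i}` is the direct sum of partial traces `⊕_i (id_{n_i} ⊗ tr_{m_i})`
(it vanishes off the diagonal blocks and acts as `id ⊗ tr` on each block, with the
`i`-th block of the input operator read off through the matrix units `basElt n m i a b`);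
moreover the range of `N` spans the left algebra `L(X) = ⊕_i M_{n_i}` and the range of the
complementary channel `N^E` spans the right algebra `R(X) = ⊕_i M_{m_i}`. -/
theorem stmt0 {k : ℕ} (n m : Fin k → ℕ) (hn : ∀ i, 0 < n i) (hm : ∀ i, 0 < m i)
    (N : ((blockDiag n m) →ₗ[ℂ] (blockDiag n m)) →ₗ[ℂ]
      Matrix (Σ i, Fin (n i)) (Σ i, Fin (n i)) ℂ)
    (NE : ((blockDiag n m) →ₗ[ℂ] (blockDiag n m)) →ₗ[ℂ]
      Matrix (Σ i, Fin (m i)) (Σ i, Fin (m i)) ℂ)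
    (hN : ∀ x y : blockDiag n m,
      N (rankOne (blockDiag n m) x y) = (x : Matrix (Σ i, Fin (n i)) (Σ i, Fin (m i)) ℂ) * (y : Matrix (Σ i, Fin (n i)) (Σ i, Fin (m i)) ℂ)ᴴ)
    (hNE : ∀ x y : blockDiag n m,
      NE (rankOne (blockDiag n m) x y) = (y : Matrix (Σ i, Fin (n i)) (Σ i, Fin (m i)) ℂ)ᴴ * (x : Matrix (Σ i, Fin (n i)) (Σ i, Fin (m i)) ℂ)) :
    IsTRO (blockDiag n m) ∧
    (∀ (ρ : (blockDiag n m) →ₗ[ℂ] (blockDiag n m)) (u v : Σ i, Fin (n i)),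
      u.1 ≠ v.1 → N ρ u v = 0) ∧
    (∀ (ρ : (blockDiag n m) →ₗ[ℂ] (blockDiag n m)) (i : Fin k) (a c : Fin (n i)),
      N ρ ⟨i, a⟩ ⟨i, c⟩ =
        ∑ b : Fin (m i),
          hsInner ((basElt n m i a b : blockDiag n m) : Matrix (Σ j, Fin (n j)) (Σ j, Fin (m j)) ℂ)
            ((ρ (basElt n m i c b) : blockDiag n m) : Matrix (Σ j, Fin (n j)) (Σ j, Fin (m j)) ℂ)) ∧
    LinearMap.range N = leftAlg (blockDiag n m) ∧
    leftAlg (blockDiag n m) = blockDiag n n ∧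
    LinearMap.range NE = rightAlg (blockDiag n m) ∧
    rightAlg (blockDiag n m) = blockDiag m m := by
  have htro : IsTRO (blockDiag n m) := by
    intro x hx y hy z hz
    refine mem_blockDiag.mpr fun u v huv => ?_
    rw [Matrix.mul_apply]
    refine Finset.sum_eq_zero fun w _ => ?_
    by_cases hw : w.1 = v.1
    · have h1 : (x * yᴴ) u w = 0 := by
        rw [Matrix.mul_apply]
        refine Finset.sum_eq_zero fun e _ => ?_
        by_cases he : u.1 = e.1
        · have hy0 : y w e = 0 := hy w e (fun h => huv (he.trans (h.symm.trans hw)))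
          rw [Matrix.conjTranspose_apply, hy0, star_zero, mul_zero]
        · rw [hx u e he, zero_mul]
      rw [h1, zero_mul]
    · rw [hz w v hw, mul_zero]
  have hoff : ∀ (ρ : (blockDiag n m) →ₗ[ℂ] (blockDiag n m)) (u v : Σ i, Fin (n i)),
      u.1 ≠ v.1 → N ρ u v = 0 := by
    intro ρ u v huv
    rw [N_eq n m N hN ρ]
    simp only [Matrix.sum_apply, Matrix.smul_apply]
    refine Finset.sum_eq_zero fun α _ => Finset.sum_eq_zero fun β _ => ?_
    rw [basMul]
    by_cases hq : (⟨α.1, α.2.2⟩ : Σ i, Fin (m i)) = ⟨β.1, β.2.2⟩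
    · rw [if_pos hq, Matrix.single_apply_of_ne, smul_zero]
      rintro ⟨h1, h2⟩
      have e1 : α.1 = u.1 := congrArg (fun p : Σ i, Fin (n i) => p.1) h1
      have e2 : β.1 = v.1 := congrArg (fun p : Σ i, Fin (n i) => p.1) h2
      have e3 : α.1 = β.1 := congrArg (fun p : Σ i, Fin (m i) => p.1) hq
      exact huv (e1.symm.trans (e3.trans e2))
    · rw [if_neg hq, Matrix.zero_apply, smul_zero]
  have hdiag : ∀ (ρ : (blockDiag n m) →ₗ[ℂ] (blockDiag n m)) (i : Fin k) (a c : Fin (n i)),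
      N ρ ⟨i, a⟩ ⟨i, c⟩ =
        ∑ b : Fin (m i),
          hsInner ((basElt n m i a b : blockDiag n m) : Matrix (Σ j, Fin (n j)) (Σ j, Fin (m j)) ℂ)
            ((ρ (basElt n m i c b) : blockDiag n m) : Matrix (Σ j, Fin (n j)) (Σ j, Fin (m j)) ℂ) := by
    intro ρ i a c
    rw [N_eq n m N hN ρ]
    simp only [Matrix.sum_apply, Matrix.smul_apply]
    refine ((Finset.sum_subset (Finset.subset_univ
        ((Finset.univ : Finset (Fin (m i))).image
          (fun b => (⟨i, (a, b)⟩ : Idx n m)))) ?_).symm).trans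
      ((Finset.sum_image ?_).trans ?_)
    · rintro ⟨j, a', b'⟩ - hα
      refine Finset.sum_eq_zero fun β _ => ?_
      rw [basMul]
      by_cases hq : (⟨j, b'⟩ : Σ i', Fin (m i')) = ⟨β.1, β.2.2⟩
      · rw [if_pos hq, Matrix.single_apply_of_ne, smul_zero]
        rintro ⟨h1, h2⟩
        dsimp only at h1
        obtain ⟨hj, ha⟩ := Sigma.mk.inj_iff.mp h1
        subst hj
        rw [heq_eq_eq] at ha
        subst ha
        exact hα (Finset.mem_image.mpr ⟨b', Finset.mem_univ _, rfl⟩)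
      · rw [if_neg hq, Matrix.zero_apply, smul_zero]
    · intro b1 _ b2 _ h
      have := (Sigma.mk.inj_iff.mp h).2
      rw [heq_eq_eq, Prod.mk.injEq] at this
      exact this.2
    · refine Finset.sum_congr rfl fun b _ => ?_
      rw [Finset.sum_eq_single (⟨i, (c, b)⟩ : Idx n m)]
      · rw [basMul, if_pos rfl, Matrix.single_apply_same, smul_eq_mul, mul_one]
        rfl
      · rintro ⟨j, c', b'⟩ - hne
        rw [basMul]
        by_cases hq : (⟨i, b⟩ : Σ i', Fin (m i')) = ⟨j, b'⟩
        · rw [if_pos hq, Matrix.single_apply_of_ne, smul_zero]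
          rintro ⟨h1, h2⟩
          dsimp only at h2
          obtain ⟨hj, hb⟩ := Sigma.mk.inj_iff.mp hq
          subst hj
          rw [heq_eq_eq] at hb
          subst hb
          obtain ⟨-, hc⟩ := Sigma.mk.inj_iff.mp h2
          rw [heq_eq_eq] at hc
          subst hc
          exact hne rfl
        · rw [if_neg hq, Matrix.zero_apply, smul_zero]
      · intro h; exact absurd (Finset.mem_univ _) h
  have hrangeN : LinearMap.range N = leftAlg (blockDiag n m) := by
    apply le_antisymm
    · rintro x hx
      obtain ⟨ρ, rfl⟩ := hx
      rw [N_eq n m N hN ρ]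
      refine Submodule.sum_mem _ fun α _ => Submodule.sum_mem _ fun β _ =>
        Submodule.smul_mem _ _ (Submodule.subset_span ?_)
      exact ⟨_, (bas n m α).2, _, (bas n m β).2, rfl⟩
    · rw [leftAlg]
      apply Submodule.span_le.mpr
      rintro a ⟨x, hx, y, hy, rfl⟩
      exact ⟨rankOne (blockDiag n m) ⟨x, hx⟩ ⟨y, hy⟩, hN ⟨x, hx⟩ ⟨y, hy⟩⟩
  have hleft : leftAlg (blockDiag n m) = blockDiag n n := by
    apply le_antisymm
    · rw [leftAlg]
      apply Submodule.span_le.mpr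
      rintro a ⟨x, hx, y, hy, rfl⟩
      refine mem_blockDiag.mpr fun u v huv => ?_
      rw [Matrix.mul_apply]
      refine Finset.sum_eq_zero fun e _ => ?_
      by_cases he : u.1 = e.1
      · have hy0 : y v e = 0 := hy v e (fun h => huv (he.trans h.symm))
        rw [Matrix.conjTranspose_apply, hy0, star_zero, mul_zero]
      · rw [hx u e he, zero_mul]
    · intro M hM
      have h2 : M = ∑ α : Idx n n, (M ⟨α.1, α.2.1⟩ ⟨α.1, α.2.2⟩) •
          ((bas n n α : blockDiag n n) : Matrix (Σ i, Fin (n i)) (Σ i, Fin (n i)) ℂ) := by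
        have h3 := congrArg Subtype.val (expand n n (⟨M, hM⟩ : blockDiag n n))
        simpa using h3
      rw [h2]
      refine Submodule.sum_mem _ fun α _ => Submodule.smul_mem _ _ (Submodule.subset_span ?_)
      have key : ((bas n n α : blockDiag n n) : Matrix (Σ i, Fin (n i)) (Σ i, Fin (n i)) ℂ) =
          ((basElt n m α.1 α.2.1 (⟨0, hm α.1⟩ : Fin (m α.1)) : blockDiag n m) :
              Matrix (Σ i, Fin (n i)) (Σ i, Fin (m i)) ℂ) *
            ((basElt n m α.1 α.2.2 (⟨0, hm α.1⟩ : Fin (m α.1)) : blockDiag n m) :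
              Matrix (Σ i, Fin (n i)) (Σ i, Fin (m i)) ℂ)ᴴ := by
        show _ = Matrix.single (⟨α.1, α.2.1⟩ : Σ i, Fin (n i))
            (⟨α.1, ⟨0, hm α.1⟩⟩ : Σ i, Fin (m i)) 1 *
          (Matrix.single (⟨α.1, α.2.2⟩ : Σ i, Fin (n i))
            (⟨α.1, ⟨0, hm α.1⟩⟩ : Σ i, Fin (m i)) (1:ℂ))ᴴ
        rw [bas_coe, stdH, std_mul_std, if_pos rfl]
      exact ⟨_, (basElt n m α.1 α.2.1 (⟨0, hm α.1⟩ : Fin (m α.1))).2, _,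
        (basElt n m α.1 α.2.2 (⟨0, hm α.1⟩ : Fin (m α.1))).2, key⟩
  have hrangeNE : LinearMap.range NE = rightAlg (blockDiag n m) := by
    apply le_antisymm
    · rintro x hx
      obtain ⟨ρ, rfl⟩ := hx
      rw [NE_eq n m NE hNE ρ]
      refine Submodule.sum_mem _ fun α _ => Submodule.sum_mem _ fun β _ =>
        Submodule.smul_mem _ _ (Submodule.subset_span ?_)
      exact ⟨_, (bas n m β).2, _, (bas n m α).2, rfl⟩
    · rw [rightAlg]
      apply Submodule.span_le.mpr
      rintro a ⟨x, hx, y, hy, rfl⟩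
      exact ⟨rankOne (blockDiag n m) ⟨y, hy⟩ ⟨x, hx⟩, hNE ⟨y, hy⟩ ⟨x, hx⟩⟩
  have hright : rightAlg (blockDiag n m) = blockDiag m m := by
    apply le_antisymm
    · rw [rightAlg]
      apply Submodule.span_le.mpr
      rintro a ⟨x, hx, y, hy, rfl⟩
      refine mem_blockDiag.mpr fun u v huv => ?_
      rw [Matrix.mul_apply]
      refine Finset.sum_eq_zero fun e _ => ?_
      by_cases he : e.1 = u.1
      · have hy0 : y e v = 0 := hy e v (fun h => huv (he.symm.trans h))
        rw [hy0, mul_zero]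
      · rw [Matrix.conjTranspose_apply, hx e u he, star_zero, zero_mul]
    · intro M hM
      have h2 : M = ∑ α : Idx m m, (M ⟨α.1, α.2.1⟩ ⟨α.1, α.2.2⟩) •
          ((bas m m α : blockDiag m m) : Matrix (Σ i, Fin (m i)) (Σ i, Fin (m i)) ℂ) := by
        have h3 := congrArg Subtype.val (expand m m (⟨M, hM⟩ : blockDiag m m))
        simpa using h3
      rw [h2]
      refine Submodule.sum_mem _ fun α _ => Submodule.smul_mem _ _ (Submodule.subset_span ?_)
      have key : ((bas m m α : blockDiag m m) : Matrix (Σ i, Fin (m i)) (Σ i, Fin (m i)) ℂ) =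
          ((basElt n m α.1 (⟨0, hn α.1⟩ : Fin (n α.1)) α.2.1 : blockDiag n m) :
              Matrix (Σ i, Fin (n i)) (Σ i, Fin (m i)) ℂ)ᴴ *
            ((basElt n m α.1 (⟨0, hn α.1⟩ : Fin (n α.1)) α.2.2 : blockDiag n m) :
              Matrix (Σ i, Fin (n i)) (Σ i, Fin (m i)) ℂ) := by
        show _ = (Matrix.single (⟨α.1, ⟨0, hn α.1⟩⟩ : Σ i, Fin (n i))
            (⟨α.1, α.2.1⟩ : Σ i, Fin (m i)) (1:ℂ))ᴴ *
          Matrix.single (⟨α.1, ⟨0, hn α.1⟩⟩ : Σ i, Fin (n i))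
            (⟨α.1, α.2.2⟩ : Σ i, Fin (m i)) 1
        rw [bas_coe, stdH, std_mul_std, if_pos rfl]
      exact ⟨_, (basElt n m α.1 (⟨0, hn α.1⟩ : Fin (n α.1)) α.2.1).2, _,
        (basElt n m α.1 (⟨0, hn α.1⟩ : Fin (n α.1)) α.2.2).2, key⟩
  exact ⟨htro, hoff, hdiag, hrangeN, hleft, hrangeNE, hright⟩

end TROPaper
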